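/- arXiv:0810.1804 — 4 statements merged into one kernel-verified Lean document; each statement's English description precedes it below -/
import Mathlib

section
/- There exists e_0 such that for all e ≥ e_0, setting q = p^e, the following holds: for every simple finite-dimensional k-linear representation U of G, there is an injective G-equivariant k-linear map from U into the quotient S/I_q, where I_q ⊆ S is the ideal generated by x_1^q, …, x_d^q (I_q is the Frobenius power m^{[q]} of the homogeneous maximal ideal m = (x_1,…,x_d); it is G-stable, since g(x_i^q) is the q-th power of a linear form in characteristic p, so S/I_q is a finite-dimensional representation of G). Equivalently (since p ∤ |G| makes k[G] semisimple), every irreducible representation of G occurs as a direct summand of S/I_q. -/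
set_option synthInstance.maxHeartbeats 1000000
set_option maxHeartbeats 1000000

open MvPolynomial

/-- The Frobenius power `m^{[q]} = (x_1^q, …, x_d^q)` of the homogeneous maximal ideal of
the polynomial ring `k[x_1, …, x_d]`. -/
noncomputable def frobeniusPowerIdeal (k : Type*) [Field k] (d q : ℕ) :
    Ideal (MvPolynomial (Fin d) k) :=
  Ideal.span (Set.range fun i : Fin d => (X i : MvPolynomial (Fin d) k) ^ q)

section Aux

variable {k : Type} [Field k] {p d : ℕ}

lemma aux_aeval_eq_eval (x : Fin d → k) (f : MvPolynomial (Fin d) k) :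
    aeval x f = eval x f := by
  rw [← coe_aeval_eq_eval]; rfl

lemma aux_totalDegree_span {f : MvPolynomial (Fin d) k}
    (hf : f ∈ Submodule.span k (Set.range (X : Fin d → MvPolynomial (Fin d) k))) :
    f.totalDegree ≤ 1 := by
  induction hf using Submodule.span_induction with
  | mem x hx => obtain ⟨i, rfl⟩ := hx; exact le_of_eq (totalDegree_X i)
  | zero => simp
  | add x y _ _ hx hy => exact (totalDegree_add x y).trans (max_le hx hy)
  | smul c x _ hx => exact (totalDegree_smul_le c x).trans hx

lemma aux_pow_mem_frob (hp : p.Prime) [CharP k p] (e : ℕ) {f : MvPolynomial (Fin d) k}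
    (hf : f ∈ Submodule.span k (Set.range (X : Fin d → MvPolynomial (Fin d) k))) :
    f ^ p ^ e ∈ frobeniusPowerIdeal k d (p ^ e) := by
  have : Fact p.Prime := ⟨hp⟩
  induction hf using Submodule.span_induction with
  | mem x hx => obtain ⟨i, rfl⟩ := hx; exact Ideal.subset_span ⟨i, rfl⟩
  | zero =>
      rw [zero_pow (Nat.pos_of_ne_zero (pow_ne_zero _ hp.ne_zero) |>.ne')]
      exact zero_mem _
  | add x y _ _ hx hy => rw [add_pow_char_pow]; exact add_mem hx hy
  | smul c x _ hx =>
      rw [smul_pow, MvPolynomial.smul_eq_C_mul]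
      exact Ideal.mul_mem_left _ _ hx

lemma aux_frob_stable (hp : p.Prime) [CharP k p] (e : ℕ)
    (g : MvPolynomial (Fin d) k ≃ₐ[k] MvPolynomial (Fin d) k)
    (hg : ∀ i, g (X i) ∈ Submodule.span k (Set.range (X : Fin d → MvPolynomial (Fin d) k)))
    {f : MvPolynomial (Fin d) k} (hf : f ∈ frobeniusPowerIdeal k d (p ^ e)) :
    g f ∈ frobeniusPowerIdeal k d (p ^ e) := by
  induction hf using Submodule.span_induction with
  | mem x hx =>
      obtain ⟨i, rfl⟩ := hx
      rw [map_pow]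
      exact aux_pow_mem_frob hp e (hg i)
  | zero => rw [map_zero]; exact zero_mem _
  | add x y _ _ hx hy => rw [map_add]; exact add_mem hx hy
  | smul r x _ hx => rw [smul_eq_mul, map_mul]; exact Ideal.mul_mem_left _ _ hx

lemma aux_eq_zero_of_mem_frob {q : ℕ} {f : MvPolynomial (Fin d) k}
    (hf : f ∈ frobeniusPowerIdeal k d q) (hdeg : f.totalDegree < q) : f = 0 := by
  rw [frobeniusPowerIdeal, Ideal.mem_span_range_iff_exists_fun] at hf
  obtain ⟨c, rfl⟩ := hf
  set f : MvPolynomial (Fin d) k := ∑ i, c i * X i ^ q with hfdef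
  ext μ
  rw [coeff_zero]
  by_contra h
  have hμ : μ.sum (fun _ n => n) ≤ f.totalDegree := le_totalDegree (by
    rw [MvPolynomial.mem_support_iff]; exact h)
  have hμi : ∀ i, μ i < q := by
    intro i
    refine lt_of_le_of_lt ?_ (hμ.trans_lt hdeg)
    by_cases hi : i ∈ μ.support
    · exact Finset.single_le_sum (f := fun j => μ j) (fun _ _ => Nat.zero_le _) hi
    · simp [Finsupp.notMem_support_iff.mp hi]
  apply h
  rw [hfdef, MvPolynomial.coeff_sum]
  refine Finset.sum_eq_zero fun i _ => ?_
  rw [X_pow_eq_monomial, coeff_mul_monomial', if_neg]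
  rw [Finsupp.single_le_iff]
  exact (hμi i).not_ge

lemma aux_interp [IsAlgClosed k]
    (G : Subgroup (MvPolynomial (Fin d) k ≃ₐ[k] MvPolynomial (Fin d) k)) [Finite G]
    (hlin : ∀ (g : G) (i : Fin d),
      (g : MvPolynomial (Fin d) k ≃ₐ[k] MvPolynomial (Fin d) k) (X i) ∈
        Submodule.span k (Set.range (X : Fin d → MvPolynomial (Fin d) k))) :
    ∃ (a : Fin d → k) (T : MvPolynomial (Fin d) k),
      (∀ g : G, ((g : MvPolynomial (Fin d) k ≃ₐ[k] MvPolynomial (Fin d) k) T).totalDegree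
          ≤ Nat.card G) ∧
      (eval a (((1 : G) : MvPolynomial (Fin d) k ≃ₐ[k] MvPolynomial (Fin d) k) T) = 1) ∧
      (∀ σ : G, σ ≠ 1 →
        eval a ((σ : MvPolynomial (Fin d) k ≃ₐ[k] MvPolynomial (Fin d) k) T) = 0) := by
  classical
  have : Fintype G := Fintype.ofFinite G
  have hne : ∀ σ : G, σ ≠ 1 → ∃ i,
      (σ : MvPolynomial (Fin d) k ≃ₐ[k] MvPolynomial (Fin d) k) (X i) ≠ X i := by
    intro σ hσ
    by_contra h
    push_neg at h
    apply hσ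
    have hh : ((σ : MvPolynomial (Fin d) k ≃ₐ[k] MvPolynomial (Fin d) k) :
        MvPolynomial (Fin d) k →ₐ[k] MvPolynomial (Fin d) k) = AlgHom.id k _ :=
      algHom_ext fun i => by simpa using h i
    refine Subtype.ext (AlgEquiv.ext fun f => ?_)
    have := DFunLike.congr_fun hh f
    simpa using this
  set Pσ : G → MvPolynomial (Fin d) k := fun σ =>
    if h : σ = 1 then 1 else
      ((σ : MvPolynomial (Fin d) k ≃ₐ[k] MvPolynomial (Fin d) k) (X (hne σ h).choose)
        - X (hne σ h).choose) with hPσ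
  have hPσ_ne : ∀ σ, Pσ σ ≠ 0 := by
    intro σ
    rw [hPσ]
    by_cases h : σ = 1
    · simp [h]
    · simpa [h] using sub_ne_zero.mpr (hne σ h).choose_spec
  have hP : (∏ σ : G, Pσ σ) ≠ 0 :=
    Finset.prod_ne_zero_iff.mpr fun σ _ => hPσ_ne σ
  have ha : ∃ a : Fin d → k, eval a (∏ σ : G, Pσ σ) ≠ 0 := by
    by_contra h
    push_neg at h
    exact hP (MvPolynomial.funext fun x => by simpa using h x)
  obtain ⟨a, ha⟩ := ha
  have hA : ∀ (σ : G) (h : σ ≠ 1),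
      eval a ((σ : MvPolynomial (Fin d) k ≃ₐ[k] MvPolynomial (Fin d) k)
        (X (hne σ h).choose)) ≠ a (hne σ h).choose := by
    intro σ h
    have h1 : eval a (Pσ σ) ≠ 0 := by
      rw [map_prod] at ha
      exact Finset.prod_ne_zero_iff.mp ha σ (Finset.mem_univ σ)
    rw [hPσ] at h1
    simp only [h, dif_neg, not_false_iff, map_sub, eval_X] at h1
    exact sub_ne_zero.mp h1
  set π : G → Fin d → k := fun σ i =>
    eval a ((σ : MvPolynomial (Fin d) k ≃ₐ[k] MvPolynomial (Fin d) k) (X i)) with hπ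
  have hcomp : ∀ (σ : G) (f : MvPolynomial (Fin d) k),
      eval a ((σ : MvPolynomial (Fin d) k ≃ₐ[k] MvPolynomial (Fin d) k) f)
        = aeval (π σ) f := by
    intro σ f
    have : (aeval a).comp
        ((σ : MvPolynomial (Fin d) k ≃ₐ[k] MvPolynomial (Fin d) k) :
          MvPolynomial (Fin d) k →ₐ[k] MvPolynomial (Fin d) k) = aeval (π σ) :=
      algHom_ext fun i => by simp [hπ, aux_aeval_eq_eval]
    have h2 := DFunLike.congr_fun this f
    simpa [aux_aeval_eq_eval] using h2
  have hπ1 : π 1 = a := by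
    funext i
    simp [hπ]
  set L : G → MvPolynomial (Fin d) k := fun σ =>
    if h : σ = 1 then 1 else
      (a (hne σ h).choose - π σ (hne σ h).choose)⁻¹ •
        (X (hne σ h).choose - C (π σ (hne σ h).choose)) with hL
  set T : MvPolynomial (Fin d) k := ∏ σ : G, L σ with hT
  refine ⟨a, T, ?_, ?_, ?_⟩
  · intro g
    rw [hT, map_prod]
    refine (totalDegree_finset_prod _ _).trans ?_
    have : ∀ σ : G,
        ((g : MvPolynomial (Fin d) k ≃ₐ[k] MvPolynomial (Fin d) k) (L σ)).totalDegree
          ≤ 1 := by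
      intro σ
      rw [hL]
      by_cases h : σ = 1
      · simp [h]
      · simp only [h, dif_neg, not_false_iff]
        rw [smul_eq_C_mul, map_mul, map_sub]
        refine (totalDegree_mul _ _).trans ?_
        have hC : (g : MvPolynomial (Fin d) k ≃ₐ[k] MvPolynomial (Fin d) k)
            (C ((a (hne σ h).choose - π σ (hne σ h).choose)⁻¹)) =
            C ((a (hne σ h).choose - π σ (hne σ h).choose)⁻¹) := by
          rw [← MvPolynomial.algebraMap_eq]
          exact AlgEquiv.commutes _ _
        have hC2 : (g : MvPolynomial (Fin d) k ≃ₐ[k] MvPolynomial (Fin d) k)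
            (C (π σ (hne σ h).choose)) = C (π σ (hne σ h).choose) := by
          rw [← MvPolynomial.algebraMap_eq]
          exact AlgEquiv.commutes _ _
        rw [hC, hC2, totalDegree_C, zero_add, sub_eq_add_neg]
        refine (totalDegree_add _ _).trans (max_le ?_ ?_)
        · exact aux_totalDegree_span (hlin g _)
        · rw [← map_neg C]
          simp [totalDegree_C]
    calc ∑ σ : G, ((g : MvPolynomial (Fin d) k ≃ₐ[k] MvPolynomial (Fin d) k)
            (L σ)).totalDegree
        ≤ ∑ _σ : G, 1 := Finset.sum_le_sum fun σ _ => this σ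
      _ = Nat.card G := by simp [Nat.card_eq_fintype_card]
  · rw [hcomp, hT, map_prod]
    refine Finset.prod_eq_one fun τ _ => ?_
    rw [hL]
    by_cases h : τ = 1
    · simp [h]
    · simp only [h, dif_neg, not_false_iff]
      rw [map_smul, map_sub, aeval_X, aeval_C, hπ1, smul_eq_mul]
      exact inv_mul_cancel₀ (sub_ne_zero.mpr (Ne.symm (hA τ h)))
  · intro σ hσ
    rw [hcomp, hT, map_prod]
    refine Finset.prod_eq_zero (Finset.mem_univ σ) ?_
    rw [hL]
    simp only [hσ, dif_neg, not_false_iff]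
    rw [map_smul, map_sub, aeval_X, aeval_C]
    simp

end Aux

/-- Let `k` be an algebraically closed field of characteristic `p > 0`,
`S = k[x_1, …, x_d]` with `d ≥ 1`, and `G` a finite group of `k`-algebra automorphisms of
`S` acting linearly on the variables, with `p ∤ |G|`. Then there exists `e₀` such that for
all `e ≥ e₀`, with `q = p^e`, every simple finite-dimensional `k`-linear representation
`U` of `G` embeds `G`-equivariantly and `k`-linearly into `S/m^{[q]}`. -/
theorem statement2 (k : Type) [Field k] [IsAlgClosed k] (p : ℕ) (hp : p.Prime) [CharP k p]
    (d : ℕ) (hd : 1 ≤ d)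
    (G : Subgroup (MvPolynomial (Fin d) k ≃ₐ[k] MvPolynomial (Fin d) k)) [Finite G]
    (hlin : ∀ (g : G) (i : Fin d),
      (g : MvPolynomial (Fin d) k ≃ₐ[k] MvPolynomial (Fin d) k) (X i) ∈
        Submodule.span k (Set.range (X : Fin d → MvPolynomial (Fin d) k)))
    (hord : ¬ p ∣ Nat.card G) :
    ∃ e₀ : ℕ, ∀ e : ℕ, e₀ ≤ e →
      ∀ (U : Type) [AddCommGroup U] [Module k U] (ρ : Representation k G U),
        FiniteDimensional k U → Nontrivial U →
        (∀ W : Submodule k U, (∀ (g : G), ∀ u ∈ W, ρ g u ∈ W) → W = ⊥ ∨ W = ⊤) →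
        ∃ φ : U →ₗ[k] (MvPolynomial (Fin d) k ⧸ frobeniusPowerIdeal k d (p ^ e)),
          Function.Injective φ ∧
          ∀ (g : G) (u : U) (s : MvPolynomial (Fin d) k),
            Ideal.Quotient.mk (frobeniusPowerIdeal k d (p ^ e)) s = φ u →
            Ideal.Quotient.mk (frobeniusPowerIdeal k d (p ^ e))
                ((g : MvPolynomial (Fin d) k ≃ₐ[k] MvPolynomial (Fin d) k) s) =
              φ (ρ g u) := by
  classical
  have hfact : Fact p.Prime := ⟨hp⟩
  have : Fintype G := Fintype.ofFinite G
  obtain ⟨a, T, hdegT, heval1, heval0⟩ := aux_interp G hlin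
  refine ⟨Nat.card G, fun e he U _ _ ρ _ hnt hsimple => ?_⟩
  have hqcard : Nat.card G < p ^ e :=
    lt_of_lt_of_le (Nat.lt_pow_self hp.one_lt) (Nat.pow_le_pow_right hp.pos he)
  -- a nonzero linear functional
  obtain ⟨u₀, hu₀⟩ := exists_ne (0 : U)
  have hlamex : ∃ lam : Module.Dual k U, lam u₀ ≠ 0 := by
    by_contra h
    push_neg at h
    exact hu₀ ((Module.forall_dual_apply_eq_zero_iff k u₀).mp h)
  obtain ⟨lam, hlam⟩ := hlamex
  -- the matrix-coefficient map into S
  set Θfun : U → MvPolynomial (Fin d) k := fun u =>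
    ∑ g : G, lam (ρ g u) •
      ((g⁻¹ : G) : MvPolynomial (Fin d) k ≃ₐ[k] MvPolynomial (Fin d) k) T with hΘ
  have Θdeg : ∀ u, (Θfun u).totalDegree < p ^ e := by
    intro u
    refine lt_of_le_of_lt ?_ hqcard
    rw [hΘ]
    exact totalDegree_finsetSum_le fun g _ =>
      (totalDegree_smul_le _ _).trans (hdegT g⁻¹)
  -- evaluation identity
  have hterm : ∀ (σ g : G) (c : k),
      eval a ((σ : MvPolynomial (Fin d) k ≃ₐ[k] MvPolynomial (Fin d) k)
        (c • ((g⁻¹ : G) : MvPolynomial (Fin d) k ≃ₐ[k] MvPolynomial (Fin d) k) T))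
      = c * eval a (((σ * g⁻¹ : G) : MvPolynomial (Fin d) k ≃ₐ[k] MvPolynomial (Fin d) k) T)
      := by
    intro σ g c
    rw [smul_eq_C_mul, map_mul, map_mul, ← MvPolynomial.algebraMap_eq,
      AlgEquiv.commutes, MvPolynomial.algebraMap_eq, eval_C,
      Subgroup.coe_mul, AlgEquiv.mul_apply]
  have Θeval : ∀ (σ : G) (u : U),
      eval a ((σ : MvPolynomial (Fin d) k ≃ₐ[k] MvPolynomial (Fin d) k) (Θfun u))
        = lam (ρ σ u) := by
    intro σ u
    rw [hΘ, map_sum, map_sum]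
    rw [Finset.sum_eq_single σ]
    · rw [hterm, mul_inv_cancel, heval1, mul_one]
    · intro g _ hgσ
      rw [hterm, heval0 (σ * g⁻¹) (by
        intro hcon
        exact hgσ (by
          have := mul_inv_eq_one.mp hcon
          exact this.symm)), mul_zero]
    · intro hσ
      exact absurd (Finset.mem_univ σ) hσ
  -- equivariance
  have Θequiv : ∀ (g : G) (u : U),
      Θfun (ρ g u) = (g : MvPolynomial (Fin d) k ≃ₐ[k] MvPolynomial (Fin d) k) (Θfun u) := by
    intro g u
    have hterm2 : ∀ h : G,
        (g : MvPolynomial (Fin d) k ≃ₐ[k] MvPolynomial (Fin d) k)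
          (lam (ρ h u) • ((h⁻¹ : G) : MvPolynomial (Fin d) k ≃ₐ[k] MvPolynomial (Fin d) k) T)
        = lam (ρ h u) •
          ((g * h⁻¹ : G) : MvPolynomial (Fin d) k ≃ₐ[k] MvPolynomial (Fin d) k) T := by
      intro h
      rw [smul_eq_C_mul, smul_eq_C_mul, map_mul, ← MvPolynomial.algebraMap_eq,
        AlgEquiv.commutes, MvPolynomial.algebraMap_eq, Subgroup.coe_mul, AlgEquiv.mul_apply]
    rw [hΘ, map_sum]
    simp only [hterm2]
    refine Fintype.sum_equiv (Equiv.mulRight g) _ _ fun h => ?_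
    have h1 : ρ h (ρ g u) = ρ (h * g) u := by rw [map_mul]; rfl
    have h3 : g * (h * g)⁻¹ = h⁻¹ := by rw [mul_inv_rev, mul_inv_cancel_left]
    simp only [Equiv.coe_mulRight, h1, h3]
  -- the linear map
  set Θ : U →ₗ[k] MvPolynomial (Fin d) k :=
    { toFun := Θfun
      map_add' := by
        intro u v
        show Θfun (u + v) = Θfun u + Θfun v
        rw [hΘ]
        simp only [map_add, add_smul]
        exact Finset.sum_add_distrib
      map_smul' := by
        intro c u
        show Θfun (c • u) = c • Θfun u
        rw [hΘ]
        simp only [map_smul, smul_smul, RingHom.id_apply]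
        rw [Finset.smul_sum]
        simp [smul_smul] } with hΘl
  set I := frobeniusPowerIdeal k d (p ^ e) with hI
  refine ⟨(Ideal.Quotient.mkₐ k I).toLinearMap.comp Θ, ?_, ?_⟩
  · -- injectivity
    have key : ∀ u : U, Θfun u ∈ I → u = 0 := by
      intro u hu
      have hz : Θfun u = 0 := aux_eq_zero_of_mem_frob hu (Θdeg u)
      have hall : ∀ σ : G, lam (ρ σ u) = 0 := by
        intro σ
        rw [← Θeval σ u, hz, map_zero, map_zero]
      -- the kernel submodule
      set K : Submodule k U :=
        { carrier := {v | ∀ σ : G, lam (ρ σ v) = 0}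
          add_mem' := by
            intro x y hx hy σ
            rw [map_add, map_add, hx σ, hy σ, add_zero]
          zero_mem' := by
            intro σ
            rw [map_zero, map_zero]
          smul_mem' := by
            intro c x hx σ
            rw [map_smul, map_smul, hx σ, smul_zero] } with hK
      have hKinv : ∀ g : G, ∀ v ∈ K, ρ g v ∈ K := by
        intro g v hv σ
        have : ρ σ (ρ g v) = ρ (σ * g) v := by rw [map_mul]; rfl
        rw [this]
        exact hv (σ * g)
      have hKne : K ≠ ⊤ := by
        intro hc
        have hmem : u₀ ∈ K := hc ▸ Submodule.mem_top
        have := hmem 1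
        rw [map_one] at this
        exact hlam this
      have hKbot : K = ⊥ := (hsimple K hKinv).resolve_right hKne
      have : u ∈ K := hall
      rw [hKbot] at this
      exact this
    intro u v huv
    have hsub : Θfun u - Θfun v ∈ I := by
      rw [← Ideal.Quotient.eq]
      exact huv
    have h0 : Θfun (u - v) ∈ I := by
      have hsub2 : Θ (u - v) = Θ u - Θ v := map_sub Θ u v
      have : Θfun (u - v) = Θfun u - Θfun v := hsub2
      rw [this]
      exact hsub
    exact sub_eq_zero.mp (key _ h0)
  · -- equivariance
    intro g u s hs
    have h1 : s - Θfun u ∈ I := by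
      rw [← Ideal.Quotient.eq]
      exact hs
    have h2 : (g : MvPolynomial (Fin d) k ≃ₐ[k] MvPolynomial (Fin d) k) s -
        (g : MvPolynomial (Fin d) k ≃ₐ[k] MvPolynomial (Fin d) k) (Θfun u) ∈ I := by
      rw [← map_sub]
      exact aux_frob_stable hp e _ (hlin g) h1
    have h3 := Ideal.Quotient.eq.mpr h2
    rw [h3]
    show _ = (Ideal.Quotient.mkₐ k I) (Θ (ρ g u))
    have : Θ (ρ g u) = (g : MvPolynomial (Fin d) k ≃ₐ[k] MvPolynomial (Fin d) k) (Θfun u) :=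
      Θequiv g u
    rw [this]
    rfl
end

section
/- For every irreducible finite-dimensional k-linear representation U of G, the module of covariants R(U) := (S ⊗_k U)^G (the G-fixed points of S ⊗_k U under the diagonal G-action, which is a module over R = S^G) is isomorphic to a direct summand of S as an R-module; that is, there exist R-linear maps ι : (S ⊗_k U)^G → S and π : S → (S ⊗_k U)^G with π ∘ ι = id. (In other words, S ≅ (k[G] ⊗_k S)^G is a full module of covariants over R.) -/
set_option synthInstance.maxHeartbeats 1000000
set_option maxHeartbeats 1000000

open MvPolynomial TensorProduct

/-- The diagonal action of `g ∈ G` on `S ⊗_k U`, where `g` acts on `S` as a `k`-algebra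
automorphism and on `U` through the representation `ρ`. -/
noncomputable def diagAction (k : Type) [Field k] (d : ℕ)
    (G : Subgroup (MvPolynomial (Fin d) k ≃ₐ[k] MvPolynomial (Fin d) k))
    (U : Type) [AddCommGroup U] [Module k U] (ρ : Representation k G U) (g : G) :
    (MvPolynomial (Fin d) k ⊗[k] U) →ₗ[k] (MvPolynomial (Fin d) k ⊗[k] U) :=
  TensorProduct.map
    (g : MvPolynomial (Fin d) k ≃ₐ[k] MvPolynomial (Fin d) k).toLinearMap (ρ g)

/-- The module of covariants `R(U) = (S ⊗_k U)^G`: the `G`-fixed points of `S ⊗_k U`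
under the diagonal action. -/
noncomputable def covariants (k : Type) [Field k] (d : ℕ)
    (G : Subgroup (MvPolynomial (Fin d) k ≃ₐ[k] MvPolynomial (Fin d) k))
    (U : Type) [AddCommGroup U] [Module k U] (ρ : Representation k G U) :
    Submodule k (MvPolynomial (Fin d) k ⊗[k] U) :=
  ⨅ g : G, LinearMap.eqLocus (diagAction k d G U ρ g) LinearMap.id

/-- Schur's lemma via eigenvalues: a `G`-equivariant endomorphism of an irreducible
finite-dimensional representation over an algebraically closed field is a scalar. -/
lemma schur_scalar {k U G : Type} [Field k] [IsAlgClosed k] [AddCommGroup U] [Module k U]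
    [FiniteDimensional k U] [Nontrivial U] [Group G] (ρ : Representation k G U)
    (hirr : ∀ W : Submodule k U, (∀ g : G, ∀ u ∈ W, ρ g u ∈ W) → W = ⊥ ∨ W = ⊤)
    (N : U →ₗ[k] U) (hN : ∀ (g : G) (u : U), N (ρ g u) = ρ g (N u)) :
    ∃ c : k, ∀ u, N u = c • u := by
  obtain ⟨μ, hμ⟩ := Module.End.exists_eigenvalue N
  refine ⟨μ, fun u => ?_⟩
  have hstab : ∀ g : G, ∀ v ∈ Module.End.eigenspace N μ, ρ g v ∈ Module.End.eigenspace N μ := by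
    intro g v hv
    rw [Module.End.mem_eigenspace_iff] at hv ⊢
    rw [hN, hv, map_smul]
  rcases hirr _ hstab with h | h
  · exact absurd h (Module.End.hasEigenvalue_iff.mp hμ)
  · have hu : u ∈ Module.End.eigenspace N μ := h ▸ Submodule.mem_top
    exact Module.End.mem_eigenspace_iff.mp hu

/-- Let `k` be an algebraically closed field of characteristic `p > 0`,
`S = k[x_1, …, x_d]` with `d ≥ 1`, and `G` a finite group of `k`-algebra automorphisms of
`S` acting linearly on the variables, with `p ∤ |G|`; let `R = S^G`. For every irreducible
finite-dimensional representation `U` of `G`, the module of covariants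
`R(U) = (S ⊗_k U)^G` is a direct summand of `S` as an `R`-module: there are maps
`ι : R(U) → S` and `π : S → R(U)` which are `k`-linear and `R`-linear (the latter expressed
elementwise) with `π ∘ ι = id`. -/
theorem statement4 (k : Type) [Field k] [IsAlgClosed k] (p : ℕ) (hp : p.Prime) [CharP k p]
    (d : ℕ) (hd : 1 ≤ d)
    (G : Subgroup (MvPolynomial (Fin d) k ≃ₐ[k] MvPolynomial (Fin d) k)) [Finite G]
    (hlin : ∀ (g : G) (i : Fin d),
      (g : MvPolynomial (Fin d) k ≃ₐ[k] MvPolynomial (Fin d) k) (X i) ∈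
        Submodule.span k (Set.range (X : Fin d → MvPolynomial (Fin d) k)))
    (hord : ¬ p ∣ Nat.card G)
    (U : Type) [AddCommGroup U] [Module k U] (ρ : Representation k G U)
    (hfd : FiniteDimensional k U) (hnt : Nontrivial U)
    (hirr : ∀ W : Submodule k U, (∀ (g : G), ∀ u ∈ W, ρ g u ∈ W) → W = ⊥ ∨ W = ⊤) :
    ∃ (ι : ↥(covariants k d G U ρ) →ₗ[k] MvPolynomial (Fin d) k)
      (π : MvPolynomial (Fin d) k →ₗ[k] ↥(covariants k d G U ρ)),
      (∀ x, π (ι x) = x) ∧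
      ∀ r : MvPolynomial (Fin d) k,
        (∀ g : G, (g : MvPolynomial (Fin d) k ≃ₐ[k] MvPolynomial (Fin d) k) r = r) →
        (∀ (x : MvPolynomial (Fin d) k ⊗[k] U) (hx : x ∈ covariants k d G U ρ)
            (hrx : r • x ∈ covariants k d G U ρ),
          ι ⟨r • x, hrx⟩ = r * ι ⟨x, hx⟩) ∧
        (∀ s : MvPolynomial (Fin d) k,
          ((π (r * s) : ↥(covariants k d G U ρ)) : MvPolynomial (Fin d) k ⊗[k] U) =
            r • ((π s : ↥(covariants k d G U ρ)) : MvPolynomial (Fin d) k ⊗[k] U)) := by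
  classical
  have : Fintype G := Fintype.ofFinite G
  set n : k := (Nat.card G : k) with hn
  have hn0 : n ≠ 0 := by
    rw [hn, Ne, CharP.cast_eq_zero_iff k p]; exact hord
  -- group action facts for ρ
  have rmul : ∀ (a b : G) (v : U), ρ (a * b) v = ρ a (ρ b v) := by
    intro a b v; rw [map_mul]; rfl
  have rinv : ∀ (a : G) (v : U), ρ a⁻¹ (ρ a v) = v := by
    intro a v
    rw [← rmul, inv_mul_cancel, map_one]; rfl
  have rinv' : ∀ (a : G) (v : U), ρ a (ρ a⁻¹ v) = v := by
    intro a v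
    rw [← rmul, mul_inv_cancel, map_one]; rfl
  -- composition of diagonal actions
  have comp_diag : ∀ (g h : G) (x : MvPolynomial (Fin d) k ⊗[k] U),
      diagAction k d G U ρ g (diagAction k d G U ρ h x) = diagAction k d G U ρ (g * h) x := by
    intro g h x
    induction x using TensorProduct.induction_on with
    | zero => simp
    | tmul s v =>
        simp only [diagAction, TensorProduct.map_tmul, AlgEquiv.toLinearMap_apply]
        rw [rmul, Subgroup.coe_mul, AlgEquiv.mul_apply]
    | add a b ha hb => rw [map_add, map_add, ha, hb, map_add]
  -- membership in covariants
  have mem_cov : ∀ x : MvPolynomial (Fin d) k ⊗[k] U,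
      x ∈ covariants k d G U ρ ↔ ∀ g : G, diagAction k d G U ρ g x = x := by
    intro x
    simp [covariants, Submodule.mem_iInf, LinearMap.mem_eqLocus]
  -- the averaging projector
  set e : (MvPolynomial (Fin d) k ⊗[k] U) →ₗ[k] MvPolynomial (Fin d) k ⊗[k] U :=
    n⁻¹ • ∑ g : G, diagAction k d G U ρ g with he
  have e_apply : ∀ x, e x = n⁻¹ • ∑ g : G, diagAction k d G U ρ g x := by
    intro x
    rw [he, LinearMap.smul_apply, LinearMap.sum_apply]
  have e_mem : ∀ x, e x ∈ covariants k d G U ρ := by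
    intro x
    rw [mem_cov]
    intro h
    rw [e_apply, map_smul, map_sum]
    congr 1
    exact Fintype.sum_equiv (Equiv.mulLeft h)
      (fun g => diagAction k d G U ρ h (diagAction k d G U ρ g x))
      (fun g => diagAction k d G U ρ g x)
      (fun g => comp_diag h g x)
  have e_fix : ∀ x ∈ covariants k d G U ρ, e x = x := by
    intro x hx
    rw [e_apply]
    have hfixed : ∀ g : G, diagAction k d G U ρ g x = x := (mem_cov x).mp hx
    simp only [hfixed]
    rw [Finset.sum_const, Finset.card_univ, ← Nat.card_eq_fintype_card,
      ← Nat.cast_smul_eq_nsmul k, smul_smul, inv_mul_cancel₀ hn0, one_smul]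
  -- action on scalar multiples
  have diag_smul : ∀ (g : G) (r : MvPolynomial (Fin d) k) (x : MvPolynomial (Fin d) k ⊗[k] U),
      diagAction k d G U ρ g (r • x) =
        ((g : MvPolynomial (Fin d) k ≃ₐ[k] MvPolynomial (Fin d) k) r) •
          diagAction k d G U ρ g x := by
    intro g r x
    induction x using TensorProduct.induction_on with
    | zero => simp
    | tmul s v =>
        rw [TensorProduct.smul_tmul', smul_eq_mul]
        simp only [diagAction, TensorProduct.map_tmul, AlgEquiv.toLinearMap_apply, map_mul]
        rw [TensorProduct.smul_tmul', smul_eq_mul]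
    | add a b ha hb => rw [smul_add, map_add, ha, hb, map_add, smul_add]
  have e_smul : ∀ (r : MvPolynomial (Fin d) k),
      (∀ g : G, (g : MvPolynomial (Fin d) k ≃ₐ[k] MvPolynomial (Fin d) k) r = r) →
      ∀ x, e (r • x) = r • e x := by
    intro r hr x
    rw [e_apply, e_apply]
    have hterm : ∀ g : G, diagAction k d G U ρ g (r • x) = r • diagAction k d G U ρ g x := by
      intro g
      rw [diag_smul, hr g]
    simp only [hterm]
    rw [← Finset.smul_sum, smul_comm]
  -- the averaged endomorphism of U
  set A : (U →ₗ[k] U) → (U →ₗ[k] U) :=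
    fun M => n⁻¹ • ∑ g : G, ρ g ∘ₗ M ∘ₗ ρ g⁻¹ with hA
  have A_apply : ∀ (M : U →ₗ[k] U) (v : U), A M v = n⁻¹ • ∑ g : G, ρ g (M (ρ g⁻¹ v)) := by
    intro M v
    rw [hA]
    simp [LinearMap.smul_apply, LinearMap.sum_apply]
  have A_equiv : ∀ (M : U →ₗ[k] U) (h : G) (v : U), A M (ρ h v) = ρ h (A M v) := by
    intro M h v
    rw [A_apply, A_apply, map_smul, map_sum]
    congr 1
    refine (Fintype.sum_equiv (Equiv.mulLeft h)
      (fun g => ρ h (ρ g (M (ρ g⁻¹ v))))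
      (fun g => ρ g (M (ρ g⁻¹ (ρ h v)))) ?_).symm
    intro g
    simp only [Equiv.coe_mulLeft]
    rw [mul_inv_rev, rmul g⁻¹ h⁻¹, rinv h v, rmul h g]
  -- A of identity is identity
  have A_id : ∀ v : U, A LinearMap.id v = v := by
    intro v
    rw [A_apply]
    simp only [LinearMap.id_apply]
    have : ∀ g : G, ρ g (ρ g⁻¹ v) = v := fun g => rinv' g v
    simp only [this]
    rw [Finset.sum_const, Finset.card_univ, ← Nat.card_eq_fintype_card,
      ← Nat.cast_smul_eq_nsmul k, smul_smul, inv_mul_cancel₀ hn0, one_smul]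
  -- choose a basis; rank-one operators
  set b := Module.finBasis k U with hb
  set Mi : Fin (Module.finrank k U) → (U →ₗ[k] U) :=
    fun i => (b.coord i).smulRight (b i) with hMi
  have sum_Mi : ∀ v : U, ∑ i, Mi i v = v := by
    intro v
    simp only [hMi, LinearMap.smulRight_apply, Module.Basis.coord_apply]
    exact b.sum_repr v
  -- A is additive over the Mi
  have A_sum : ∀ v : U, ∑ i, A (Mi i) v = v := by
    intro v
    have : ∑ i, A (Mi i) v = A LinearMap.id v := by
      simp only [A_apply, LinearMap.id_apply]
      rw [← Finset.smul_sum]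
      rw [Finset.sum_comm]
      congr 1
      refine Finset.sum_congr rfl fun g _ => ?_
      rw [← map_sum]
      congr 1
      exact sum_Mi (ρ g⁻¹ v)
    rw [this, A_id]
  -- Schur: each A (Mi i) is a scalar c i
  have schur : ∀ i, ∃ c : k, ∀ v, A (Mi i) v = c • v := by
    intro i
    exact schur_scalar ρ hirr (A (Mi i)) (A_equiv (Mi i))
  choose c hc using schur
  -- the scalars sum to 1, so some c i ≠ 0
  obtain ⟨v0, hv0⟩ := exists_ne (0 : U)
  have hsum_c : (∑ i, c i) = 1 := by
    have h1 : (∑ i, c i) • v0 = v0 := by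
      rw [Finset.sum_smul]
      have heach : ∀ i ∈ Finset.univ, c i • v0 = A (Mi i) v0 := fun i _ => (hc i v0).symm
      rw [Finset.sum_congr rfl heach, A_sum v0]
    have h2 : ((∑ i, c i) - 1) • v0 = 0 := by
      rw [sub_smul, one_smul, h1, sub_self]
    rcases smul_eq_zero.mp h2 with h | h
    · rw [sub_eq_zero] at h; exact h
    · exact absurd h hv0
  have hex : ∃ i, c i ≠ 0 := by
    by_contra hcon
    push_neg at hcon
    rw [Finset.sum_congr rfl (fun i _ => hcon i), Finset.sum_const, smul_zero] at hsum_c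
    exact one_ne_zero hsum_c.symm
  obtain ⟨i0, hi0⟩ := hex
  set lam : k := c i0 with hlam
  set φ : U →ₗ[k] k := b.coord i0 with hφ
  set u0 : U := b i0 with hu0
  have hM0 : Mi i0 = φ.smulRight u0 := rfl
  -- contraction and insertion maps
  set C : (MvPolynomial (Fin d) k ⊗[k] U) →ₗ[k] MvPolynomial (Fin d) k :=
    (TensorProduct.rid k (MvPolynomial (Fin d) k)).toLinearMap ∘ₗ
      LinearMap.lTensor (MvPolynomial (Fin d) k) φ with hC
  have C_tmul : ∀ (s : MvPolynomial (Fin d) k) (v : U), C (s ⊗ₜ[k] v) = φ v • s := by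
    intro s v
    rw [hC]
    simp [LinearMap.lTensor_tmul, TensorProduct.rid_tmul]
  set ins : MvPolynomial (Fin d) k →ₗ[k] MvPolynomial (Fin d) k ⊗[k] U :=
    (TensorProduct.mk k (MvPolynomial (Fin d) k) U).flip u0 with hins
  have ins_apply : ∀ s : MvPolynomial (Fin d) k, ins s = s ⊗ₜ[k] u0 := fun s => rfl
  -- ins ∘ C = lTensor (Mi i0)
  have insC : ∀ x : MvPolynomial (Fin d) k ⊗[k] U,
      ins (C x) = LinearMap.lTensor (MvPolynomial (Fin d) k) (Mi i0) x := by
    intro x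
    induction x using TensorProduct.induction_on with
    | zero => simp
    | tmul s v =>
        rw [C_tmul, ins_apply, LinearMap.lTensor_tmul, hM0, LinearMap.smulRight_apply,
          TensorProduct.tmul_smul, TensorProduct.smul_tmul']
    | add a b ha hb => rw [map_add, map_add, ha, hb, map_add]
  -- key: diagAction g ∘ lTensor M = lTensor (ρ g ∘ M ∘ ρ g⁻¹) ∘ diagAction g
  have diag_lTensor : ∀ (g : G) (M : U →ₗ[k] U) (y : MvPolynomial (Fin d) k ⊗[k] U),
      diagAction k d G U ρ g (LinearMap.lTensor (MvPolynomial (Fin d) k) M y) =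
        LinearMap.lTensor (MvPolynomial (Fin d) k) (ρ g ∘ₗ M ∘ₗ ρ g⁻¹)
          (diagAction k d G U ρ g y) := by
    intro g M y
    induction y using TensorProduct.induction_on with
    | zero => simp
    | tmul s v =>
        simp only [diagAction, LinearMap.lTensor_tmul, TensorProduct.map_tmul,
          AlgEquiv.toLinearMap_apply, LinearMap.comp_apply]
        rw [rinv]
    | add a b ha hb => rw [map_add, map_add, ha, hb, map_add, map_add]
  -- key computation: e (lTensor (Mi i0) x) = lam • x for invariant x
  have key : ∀ x ∈ covariants k d G U ρ,
      e (LinearMap.lTensor (MvPolynomial (Fin d) k) (Mi i0) x) = lam • x := by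
    intro x hx
    have hfixed : ∀ g : G, diagAction k d G U ρ g x = x := (mem_cov x).mp hx
    rw [e_apply]
    have step : ∀ g : G,
        diagAction k d G U ρ g (LinearMap.lTensor (MvPolynomial (Fin d) k) (Mi i0) x) =
          LinearMap.lTensor (MvPolynomial (Fin d) k) (ρ g ∘ₗ Mi i0 ∘ₗ ρ g⁻¹) x := by
      intro g
      rw [diag_lTensor, hfixed]
    simp only [step]
    have hsum : (∑ g : G, LinearMap.lTensor (MvPolynomial (Fin d) k) (ρ g ∘ₗ Mi i0 ∘ₗ ρ g⁻¹)) =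
        LinearMap.lTensor (MvPolynomial (Fin d) k) (∑ g : G, ρ g ∘ₗ Mi i0 ∘ₗ ρ g⁻¹) := by
      simp_rw [← LinearMap.coe_lTensorHom]
      exact (map_sum (LinearMap.lTensorHom (MvPolynomial (Fin d) k))
        (fun g : G => ρ g ∘ₗ Mi i0 ∘ₗ ρ g⁻¹) Finset.univ).symm
    rw [← LinearMap.sum_apply, hsum, ← LinearMap.smul_apply, ← LinearMap.lTensor_smul]
    have hAM : (n⁻¹ • ∑ g : G, ρ g ∘ₗ Mi i0 ∘ₗ ρ g⁻¹) = lam • LinearMap.id := by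
      ext v
      have h := hc i0 v
      rw [hA] at h
      simp only [LinearMap.smul_apply, LinearMap.id_apply]
      exact h
    rw [hAM, LinearMap.lTensor_smul, LinearMap.lTensor_id]
    simp only [LinearMap.smul_apply, LinearMap.id_apply]
  -- C is S-linear
  have C_smul : ∀ (r : MvPolynomial (Fin d) k) (x : MvPolynomial (Fin d) k ⊗[k] U),
      C (r • x) = r * C x := by
    intro r x
    induction x using TensorProduct.induction_on with
    | zero => rw [smul_zero, map_zero, mul_zero]
    | tmul s v =>
        rw [TensorProduct.smul_tmul', smul_eq_mul, C_tmul, C_tmul, mul_smul_comm]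
    | add a b ha hb => rw [smul_add, map_add, ha, hb, map_add, mul_add]
  -- the splitting maps
  refine ⟨lam⁻¹ • (C ∘ₗ (covariants k d G U ρ).subtype),
    LinearMap.codRestrict (covariants k d G U ρ) (e ∘ₗ ins) (fun s => e_mem (ins s)),
    ?_, ?_⟩
  · intro x
    apply Subtype.ext
    have : ((LinearMap.codRestrict (covariants k d G U ρ) (e ∘ₗ ins)
        (fun s => e_mem (ins s))) ((lam⁻¹ • (C ∘ₗ (covariants k d G U ρ).subtype)) x) :
        MvPolynomial (Fin d) k ⊗[k] U) =
        e (ins (lam⁻¹ • C (x : MvPolynomial (Fin d) k ⊗[k] U))) := rfl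
    rw [this, map_smul, map_smul, insC, key (x : MvPolynomial (Fin d) k ⊗[k] U) x.2,
      smul_smul, inv_mul_cancel₀ hi0, one_smul]
  · intro r hr
    constructor
    · intro x hx hrx
      have h1 : (lam⁻¹ • (C ∘ₗ (covariants k d G U ρ).subtype))
          (⟨r • x, hrx⟩ : covariants k d G U ρ) = lam⁻¹ • C (r • x) := rfl
      have h2 : (lam⁻¹ • (C ∘ₗ (covariants k d G U ρ).subtype))
          (⟨x, hx⟩ : covariants k d G U ρ) = lam⁻¹ • C x := rfl
      rw [h1, h2, C_smul, mul_smul_comm]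
    · intro s
      have h1 : ∀ t : MvPolynomial (Fin d) k,
          ((LinearMap.codRestrict (covariants k d G U ρ) (e ∘ₗ ins)
            (fun s => e_mem (ins s)) t : covariants k d G U ρ) :
            MvPolynomial (Fin d) k ⊗[k] U) = e (ins t) := fun t => rfl
      rw [h1, h1, ins_apply, ins_apply]
      have : (r * s) ⊗ₜ[k] u0 = r • (s ⊗ₜ[k] u0) := by
        rw [TensorProduct.smul_tmul', smul_eq_mul]
      rw [this, e_smul r hr]
end

section
/- Let k be a field of odd prime characteristic p and let d ≥ 1. In the polynomial ring k[x_0, …, x_d], the element (x_0^2 + x_1^2 + ⋯ + x_d^2)^{p-1} does not belong to the ideal generated by x_0^p, x_1^p, …, x_d^p. (Indeed, the monomial x_0^{p-1} x_1^{p-1} · x_2^0 ⋯ x_d^0 appears in the expansion with coefficient a nonzero multiple of the binomial coefficient C(p-1, (p-1)/2), which is nonzero in k.) -/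
open MvPolynomial

/-- Let `k` be a field of odd prime characteristic `p` and `d ≥ 1`. In
`k[x_0, …, x_d]`, the element `(x_0^2 + ⋯ + x_d^2)^(p-1)` does not belong to the ideal
generated by `x_0^p, …, x_d^p`. -/
theorem statement13 (k : Type*) [Field k] (p : ℕ) (hp : p.Prime) (hodd : Odd p) [CharP k p]
    (d : ℕ) (hd : 1 ≤ d) :
    ((∑ i : Fin (d + 1), X i ^ 2 : MvPolynomial (Fin (d + 1)) k) ^ (p - 1)) ∉
      Ideal.span (Set.range fun i : Fin (d + 1) =>
        (X i : MvPolynomial (Fin (d + 1)) k) ^ p) := by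
  intro hmem
  have hval1 : (1 : Fin (d + 1)).val = 1 := by
    rw [Fin.val_one']; exact Nat.mod_eq_of_lt (by omega)
  have h01 : (0 : Fin (d + 1)) ≠ 1 := by
    intro h
    have := congrArg Fin.val h
    rw [Fin.val_zero, hval1] at this
    exact absurd this (by omega)
  set n := p - 1 with hn
  obtain ⟨m, hmp⟩ := hodd
  have hnm : n = 2 * m := by omega
  -- the substitution killing variables other than x_0, x_1
  set φ : MvPolynomial (Fin (d + 1)) k →ₐ[k] MvPolynomial (Fin (d + 1)) k :=
    aeval (fun i : Fin (d + 1) => if i.val ≤ 1 then X i else 0) with hφ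
  set I : Ideal (MvPolynomial (Fin (d + 1)) k) := Ideal.span (Set.range fun i : Fin (d + 1) =>
        (X i : MvPolynomial (Fin (d + 1)) k) ^ p) with hI
  have hφmem : φ ((∑ i : Fin (d + 1), X i ^ 2) ^ n) ∈ I := by
    have h1 : φ ((∑ i : Fin (d + 1), X i ^ 2) ^ n) ∈ Ideal.map φ.toRingHom I :=
      Ideal.mem_map_of_mem _ hmem
    rw [hI, Ideal.map_span] at h1
    refine Ideal.span_le.mpr ?_ h1
    rintro _ ⟨_, ⟨i, rfl⟩, rfl⟩
    show φ (X i ^ p) ∈ I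
    rw [map_pow, hφ, aeval_X]
    by_cases h : i.val ≤ 1
    · rw [if_pos h]; exact Ideal.subset_span ⟨i, rfl⟩
    · rw [if_neg h, zero_pow hp.ne_zero]; exact I.zero_mem
  have hφval : φ ((∑ i : Fin (d + 1), X i ^ 2) ^ n)
      = ((X 0 ^ 2 + X 1 ^ 2 : MvPolynomial (Fin (d + 1)) k)) ^ n := by
    rw [map_pow, map_sum]
    congr 1
    have hz : ∀ i ∈ (Finset.univ : Finset (Fin (d + 1))), i ∉ ({0, 1} : Finset (Fin (d + 1))) →
        φ (X i ^ 2) = 0 := by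
      intro i _ hi
      simp only [Finset.mem_insert, Finset.mem_singleton, not_or] at hi
      have : ¬ i.val ≤ 1 := by
        intro h
        interval_cases h' : i.val
        · exact hi.1 (Fin.ext (by rw [h', Fin.val_zero]))
        · exact hi.2 (Fin.ext (by rw [h', hval1]))
      rw [map_pow, hφ, aeval_X, if_neg this, zero_pow (by norm_num)]
    rw [← Finset.sum_subset (Finset.subset_univ ({0, 1} : Finset (Fin (d + 1)))) hz,
      Finset.sum_pair h01, map_pow, map_pow, hφ, aeval_X, aeval_X,
      if_pos (by simp), if_pos (by rw [hval1])]
  rw [hφval] at hφmem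
  -- coefficient of x_0^n x_1^n
  set m0 : Fin (d + 1) →₀ ℕ := Finsupp.single 0 n + Finsupp.single 1 n with hm0
  have hcoeff : coeff m0 ((X 0 ^ 2 + X 1 ^ 2 : MvPolynomial (Fin (d + 1)) k) ^ n)
      = (n.choose m : k) := by
    rw [add_pow, coeff_sum]
    have hterm : ∀ j ∈ Finset.range (n + 1),
        coeff m0 ((X 0 ^ 2 : MvPolynomial (Fin (d + 1)) k) ^ j * (X 1 ^ 2) ^ (n - j)
          * (n.choose j : MvPolynomial (Fin (d + 1)) k))
        = if j = m then (n.choose j : k) else 0 := by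
      intro j hj
      rw [Finset.mem_range] at hj
      rw [← pow_mul, ← pow_mul, X_pow_eq_monomial, X_pow_eq_monomial, monomial_mul, mul_one,
        show ((n.choose j : MvPolynomial (Fin (d + 1)) k)) = C ((n.choose j : k)) by
          simp, mul_comm, coeff_C_mul, coeff_monomial]
      have hcond : (Finsupp.single 0 (2 * j) + Finsupp.single 1 (2 * (n - j)) = m0) ↔ j = m := by
        constructor
        · intro h
          have h0 := DFunLike.congr_fun h 0
          simp only [Finsupp.coe_add, Pi.add_apply, Finsupp.single_apply, hm0] at h0
          rw [if_pos trivial, if_pos trivial, if_neg (Ne.symm h01), if_neg (Ne.symm h01)] at h0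
          omega
        · intro h
          subst h
          rw [hm0]
          congr 1 <;> congr 1 <;> omega
      simp only [hcond]
      split <;> simp
    rw [Finset.sum_congr rfl hterm, Finset.sum_ite_eq' (Finset.range (n + 1)) m
      (fun j => (n.choose j : k)), if_pos (Finset.mem_range.mpr (by omega))]
  have hne : (n.choose m : k) ≠ 0 := by
    rw [Ne, CharP.cast_eq_zero_iff k p]
    intro hdvd
    have hfac : n.choose m ∣ Nat.factorial n :=
      ⟨Nat.factorial m * Nat.factorial (n - m), by
        rw [← Nat.choose_mul_factorial_mul_factorial (show m ≤ n by omega)]; ring⟩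
    have := (Nat.Prime.dvd_factorial hp).mp (hdvd.trans hfac)
    omega
  have hsupp : m0 ∈ ((X 0 ^ 2 + X 1 ^ 2 : MvPolynomial (Fin (d + 1)) k) ^ n).support := by
    rw [mem_support_iff, hcoeff]; exact hne
  have himg : (Set.range fun i : Fin (d + 1) => (X i : MvPolynomial (Fin (d + 1)) k) ^ p)
      = (fun s => monomial s (1 : k)) '' (Set.range fun i : Fin (d + 1) => Finsupp.single i p) := by
    rw [← Set.range_comp]
    exact congrArg _ (funext fun i => X_pow_eq_monomial)
  rw [hI, himg, mem_ideal_span_monomial_image] at hφmem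
  obtain ⟨_, ⟨i, rfl⟩, hle⟩ := hφmem m0 hsupp
  have hple : p ≤ m0 i := Finsupp.single_le_iff.mp hle
  have : m0 i ≤ n := by
    rw [hm0]
    simp only [Finsupp.coe_add, Pi.add_apply, Finsupp.single_apply]
    by_cases h0 : (0 : Fin (d + 1)) = i
    · rw [if_pos h0, if_neg (h0 ▸ h01.symm)]; omega
    · rw [if_neg h0]
      split <;> omega
  omega
end

section
/- Let k be an algebraically closed field of odd characteristic p and let d ≥ 1. Let R = k[[x_0, …, x_d]]/(x_0^2 + x_1^2 + ⋯ + x_d^2) be the d-dimensional simple (A_1) hypersurface singularity. Then R is F-pure: there exists an additive map φ : R → R with φ(1) = 1 and φ(a^p · b) = a · φ(b) for all a, b ∈ R (equivalently, the inclusion R^p ↪ R splits as an R^p-module homomorphism). -/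
open MvPowerSeries
set_option linter.unusedSectionVars false

section CoeffPow
variable {σ : Type*} [DecidableEq σ] {k : Type*} [Field k]

lemma mvps_charP (p : ℕ) [CharP k p] : CharP (MvPowerSeries σ k) p :=
  charP_of_injective_ringHom (f := (MvPowerSeries.C (σ := σ) (R := k)))
    (fun a b h => by simpa using congrArg (constantCoeff (σ := σ) (R := k)) h) p

lemma mvps_monomial_pow (m : σ →₀ ℕ) (c : k) (j : ℕ) :
    (monomial m c) ^ j = monomial (j • m) (c ^ j) := by
  induction j with
  | zero => simp [MvPowerSeries.monomial_zero_one]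
  | succ n ih =>
      rw [pow_succ, ih, monomial_mul_monomial, succ_nsmul, pow_succ]

lemma coeff_pow_congr (j : ℕ) (a b : MvPowerSeries σ k) (n : σ →₀ ℕ)
    (h : ∀ m ≤ n, coeff m a = coeff m b) :
    coeff n (a ^ j) = coeff n (b ^ j) := by
  rw [MvPowerSeries.coeff_pow, MvPowerSeries.coeff_pow]
  refine Finset.sum_congr rfl fun l hl => Finset.prod_congr rfl fun i hi => ?_
  rw [Finset.mem_finsuppAntidiag] at hl
  refine h _ ?_
  calc l i ≤ ∑ x ∈ Finset.range j, l x :=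
        Finset.single_le_sum (f := fun x => l x) (fun x _ => zero_le) hi
  _ = n := hl.1

variable (p : ℕ) [hp : Fact p.Prime] [CharP k p]

/-- p-th power property for a single mv power series. -/
def PowProp (a : MvPowerSeries σ k) : Prop :=
  (∀ m : σ →₀ ℕ, coeff (p • m) (a ^ p) = (coeff m a) ^ p) ∧
  (∀ n : σ →₀ ℕ, (∀ m, n ≠ p • m) → coeff n (a ^ p) = 0)

lemma powProp_monomial (m : σ →₀ ℕ) (c : k) : PowProp p (monomial m c) := by
  constructor
  · intro m'
    rw [mvps_monomial_pow, MvPowerSeries.coeff_monomial, MvPowerSeries.coeff_monomial]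
    by_cases h : m' = m
    · subst h; simp
    · rw [if_neg h, if_neg, zero_pow hp.out.ne_zero]
      intro hc
      apply h
      ext i
      have h2 : p * m' i = p * m i := by
        simpa [Finsupp.smul_apply] using DFunLike.congr_fun hc i
      exact Nat.eq_of_mul_eq_mul_left hp.out.pos h2
  · intro n hn
    rw [mvps_monomial_pow, MvPowerSeries.coeff_monomial, if_neg (hn m)]

lemma powProp_zero : PowProp p (0 : MvPowerSeries σ k) := by
  refine ⟨fun m => ?_, fun n _ => ?_⟩ <;>
    simp [zero_pow hp.out.ne_zero]

lemma powProp_add (a b : MvPowerSeries σ k) (ha : PowProp p a) (hb : PowProp p b) :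
    PowProp p (a + b) := by
  haveI := mvps_charP (σ := σ) (k := k) p
  constructor
  · intro m
    rw [add_pow_char, map_add, map_add, add_pow_char, ha.1, hb.1]
  · intro n hn
    rw [add_pow_char, map_add, ha.2 n hn, hb.2 n hn, add_zero]

lemma powProp_trunc (n : σ →₀ ℕ) (a : MvPowerSeries σ k) :
    PowProp p (∑ m ∈ Finset.Iic n, monomial m (coeff m a)) := by
  classical
  refine Finset.sum_induction _ _ (fun x y => powProp_add p x y) (powProp_zero p) ?_
  exact fun m _ => powProp_monomial p m _

lemma coeff_trunc_sum (n : σ →₀ ℕ) (a : MvPowerSeries σ k) (m : σ →₀ ℕ) :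
    coeff m (∑ m' ∈ Finset.Iic n, monomial m' (coeff m' a)) =
      if m ≤ n then coeff m a else 0 := by
  classical
  rw [map_sum]
  simp only [MvPowerSeries.coeff_monomial]
  rw [Finset.sum_ite_eq (Finset.Iic n) m (fun m' => coeff m' a)]
  simp [Finset.mem_Iic]

lemma coeff_pow_char (a : MvPowerSeries σ k) (m : σ →₀ ℕ) :
    coeff (p • m) (a ^ p) = (coeff m a) ^ p := by
  classical
  have h1 : coeff (p • m) (a ^ p) =
      coeff (p • m) ((∑ m' ∈ Finset.Iic (p • m), monomial m' (coeff m' a)) ^ p) := by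
    refine coeff_pow_congr p a _ (p • m) fun m' hm' => ?_
    rw [coeff_trunc_sum, if_pos hm']
  rw [h1, (powProp_trunc p (p • m) a).1 m, coeff_trunc_sum, if_pos]
  intro i
  simpa using Nat.le_mul_of_pos_left (m i) hp.out.pos

lemma coeff_pow_char_ne (a : MvPowerSeries σ k) (n : σ →₀ ℕ) (hn : ∀ m, n ≠ p • m) :
    coeff n (a ^ p) = 0 := by
  classical
  have h1 : coeff n (a ^ p) =
      coeff n ((∑ m' ∈ Finset.Iic n, monomial m' (coeff m' a)) ^ p) := by
    refine coeff_pow_congr p a _ n fun m' hm' => ?_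
    rw [coeff_trunc_sum, if_pos hm']
  rw [h1, (powProp_trunc p n a).2 n hn]

variable [PerfectRing k p]

/-- The `e`-component of the inverse-Frobenius splitting operator on power series. -/
noncomputable def Phi (e : σ →₀ ℕ) : MvPowerSeries σ k →+ MvPowerSeries σ k where
  toFun g := fun n => (frobeniusEquiv k p).symm (coeff (p • n + e) g)
  map_zero' := by funext n; simp; rfl
  map_add' g h := by funext n; simp only [map_add]; rfl

lemma coeff_Phi (e : σ →₀ ℕ) (g : MvPowerSeries σ k) (n : σ →₀ ℕ) :
    coeff n (Phi p e g) = (frobeniusEquiv k p).symm (coeff (p • n + e) g) := rfl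

lemma frobInv_pow (c : k) : (frobeniusEquiv k p).symm (c ^ p) = c := by
  have : c ^ p = frobeniusEquiv k p c := rfl
  rw [this, RingEquiv.symm_apply_apply]

/-- Key semilinearity: `Φ_e (a^p * g) = a * Φ_e g` provided all entries of `e` are `< p`. -/
lemma Phi_pow_mul (e : σ →₀ ℕ) (he : ∀ i, e i < p) (a g : MvPowerSeries σ k) :
    Phi p e (a ^ p * g) = a * Phi p e g := by
  classical
  funext n
  have lhs : Phi p e (a ^ p * g) n =
      ∑ y ∈ Finset.HasAntidiagonal.antidiagonal (p • n + e),
        (frobeniusEquiv k p).symm (coeff y.1 (a ^ p) * coeff y.2 g) := by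
    show (frobeniusEquiv k p).symm (coeff (p • n + e) (a ^ p * g)) = _
    rw [MvPowerSeries.coeff_mul, map_sum]
  have rhs : (a * Phi p e g) n =
      ∑ x ∈ Finset.HasAntidiagonal.antidiagonal n,
        coeff x.1 a * (frobeniusEquiv k p).symm (coeff (p • x.2 + e) g) := by
    show coeff n (a * Phi p e g) = _
    rw [MvPowerSeries.coeff_mul]
    exact Finset.sum_congr rfl fun x _ => by rw [coeff_Phi]
  rw [lhs, rhs]
  -- restrict to p-divisible first components
  rw [← Finset.sum_filter_add_sum_filter_not _ (fun y => ∀ i, p ∣ y.1 i)]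
  have hzero : ∑ y ∈ (Finset.HasAntidiagonal.antidiagonal (p • n + e)).filter (fun y => ¬ ∀ i, p ∣ y.1 i),
      (frobeniusEquiv k p).symm (coeff y.1 (a ^ p) * coeff y.2 g) = 0 := by
    refine Finset.sum_eq_zero fun y hy => ?_
    rw [Finset.mem_filter] at hy
    rw [coeff_pow_char_ne p a y.1 (fun m hm => hy.2 (fun i => ⟨m i, by
      simpa [Finsupp.smul_apply] using DFunLike.congr_fun hm i⟩)), zero_mul, map_zero]
  rw [hzero, add_zero]
  have key : ∀ u v : σ →₀ ℕ, u + v = p • n + e → (∀ i, p ∣ u i) →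
      (u.mapRange (· / p) (by simp) ≤ n) ∧
      p • (u.mapRange (· / p) (by simp) : σ →₀ ℕ) = u ∧
      p • (n - (u.mapRange (· / p) (by simp) : σ →₀ ℕ)) + e = v := by
    intro u v hsum hdvd
    have hmul : ∀ i, p * (u i / p) = u i := fun i => Nat.mul_div_cancel' (hdvd i)
    have hcomp : ∀ i, u i + v i = p * n i + e i := by
      intro i
      have := DFunLike.congr_fun hsum i
      simpa [Finsupp.smul_apply] using this
    have hle : (u.mapRange (· / p) (by simp) : σ →₀ ℕ) ≤ n := by
      intro i
      simp only [Finsupp.mapRange_apply]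
      have h1 : u i ≤ p * n i + e i := le_trans (Nat.le_add_right _ _) (hcomp i).le
      have h4 : p * (u i / p) < p * (n i + 1) := by
        rw [hmul i, Nat.mul_succ]
        exact lt_of_le_of_lt h1 (Nat.add_lt_add_left (he i) _)
      exact Nat.lt_succ_iff.mp (Nat.lt_of_mul_lt_mul_left h4)
    refine ⟨hle, ?_, ?_⟩
    · ext i
      simpa [Finsupp.smul_apply] using hmul i
    · ext i
      have hli := hle i
      simp only [Finsupp.add_apply, Finsupp.smul_apply, smul_eq_mul,
        Finsupp.tsub_apply, Finsupp.mapRange_apply] at hli ⊢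
      have hA : p * (u i / p) ≤ p * n i := Nat.mul_le_mul_left p hli
      have hB : p * (n i - u i / p) = p * n i - p * (u i / p) := Nat.mul_sub_left_distrib ..
      have h1 := hcomp i
      have h2 := hmul i
      omega
  refine (Finset.sum_bij' (fun x (_ : x ∈ Finset.HasAntidiagonal.antidiagonal n) =>
      ((p • x.1, p • x.2 + e) : (σ →₀ ℕ) × (σ →₀ ℕ)))
    (fun y (_ : y ∈ (Finset.HasAntidiagonal.antidiagonal (p • n + e)).filter (fun y => ∀ i, p ∣ y.1 i)) =>
      ((y.1.mapRange (· / p) (by simp) : σ →₀ ℕ),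
        (n - y.1.mapRange (· / p) (by simp) : σ →₀ ℕ)))
    ?_ ?_ ?_ ?_ ?_).symm
  · -- i maps into the filtered set
    intro x hx
    rw [Finset.HasAntidiagonal.mem_antidiagonal] at hx
    rw [Finset.mem_filter, Finset.HasAntidiagonal.mem_antidiagonal]
    constructor
    · rw [← add_assoc, ← smul_add, hx]
    · intro i; exact ⟨x.1 i, by simp [Finsupp.smul_apply]⟩
  · -- j maps into antidiagonal n
    intro y hy
    rw [Finset.mem_filter, Finset.HasAntidiagonal.mem_antidiagonal] at hy
    rw [Finset.HasAntidiagonal.mem_antidiagonal]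
    exact add_tsub_cancel_of_le (key y.1 y.2 hy.1 hy.2).1
  · -- left inverse : j (i x) = x
    intro x hx
    rw [Finset.HasAntidiagonal.mem_antidiagonal] at hx
    dsimp only
    have h1 : ((p • x.1 : σ →₀ ℕ).mapRange (· / p) (by simp) : σ →₀ ℕ) = x.1 := by
      ext i
      simp only [Finsupp.mapRange_apply, Finsupp.smul_apply, smul_eq_mul]
      exact Nat.mul_div_cancel_left _ hp.out.pos
    have h2 : n - x.1 = x.2 := by
      rw [← hx]; exact add_tsub_cancel_left x.1 x.2
    rw [h1, h2]
  · -- right inverse : i (j y) = y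
    intro y hy
    rw [Finset.mem_filter, Finset.HasAntidiagonal.mem_antidiagonal] at hy
    dsimp only
    obtain ⟨-, h2, h3⟩ := key y.1 y.2 hy.1 hy.2
    rw [h2, h3]
  · -- values agree
    intro x hx
    dsimp only
    rw [coeff_pow_char, map_mul, frobInv_pow]

end CoeffPow

section A1

/-- The `d`-dimensional simple hypersurface singularity of type `A₁`:
`R = k[[x_0, …, x_d]] / (x_0^2 + x_1^2 + ⋯ + x_d^2)`. -/
def A1Singularity (k : Type*) [Field k] (d : ℕ) : Type _ :=
  MvPowerSeries (Fin (d + 1)) k ⧸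
    Ideal.span {(∑ i : Fin (d + 1), MvPowerSeries.X i ^ 2 : MvPowerSeries (Fin (d + 1)) k)}

noncomputable instance (k : Type*) [Field k] (d : ℕ) : CommRing (A1Singularity k d) :=
  Ideal.Quotient.commRing _

variable {k : Type*} [Field k]

/-- The coefficient of `(x_0 x_1)^{2t}`-type monomial in `(∑ x_i²)^{2t}`. -/
lemma coeff_f_pow (p : ℕ) (hp : p.Prime) [CharP k p] (t : ℕ) (hpt : p = 2 * t + 1) (d' : ℕ) :
    MvPowerSeries.coeff
      (Finsupp.single (0 : Fin (d' + 2)) (p - 1) + Finsupp.single 1 (p - 1))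
      ((∑ i : Fin (d' + 2), MvPowerSeries.X i ^ 2 : MvPowerSeries (Fin (d' + 2)) k) ^ (p - 1))
      = ((p - 1).choose t : k) := by
  classical
  set σ := Fin (d' + 2)
  have h01 : (0 : σ) ≠ 1 := Fin.zero_ne_one
  set f : MvPowerSeries σ k := ∑ i : σ, MvPowerSeries.X i ^ 2 with hfdef
  set h : MvPowerSeries σ k := MvPowerSeries.X 0 ^ 2 + MvPowerSeries.X 1 ^ 2 with hhdef
  set g : MvPowerSeries σ k :=
    ∑ i ∈ (Finset.univ \ {0, 1} : Finset σ), MvPowerSeries.X i ^ 2 with hgdef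
  set e : σ →₀ ℕ := Finsupp.single (0 : σ) (p - 1) + Finsupp.single 1 (p - 1) with hedef
  have hfgh : f = g + h := by
    rw [hfdef, hgdef, hhdef, ← Finset.sum_sdiff (Finset.subset_univ ({0, 1} : Finset σ)),
      Finset.sum_pair h01]
  -- e vanishes off {0, 1}
  have he_off : ∀ i : σ, i ∉ ({0, 1} : Finset σ) → e i = 0 := by
    intro i hi
    simp only [Finset.mem_insert, Finset.mem_singleton, not_or] at hi
    simp [hedef, Finsupp.single_apply, Ne.symm hi.1, Ne.symm hi.2]
  -- products with g have zero coefficient at e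
  have hgmul : ∀ c : MvPowerSeries σ k, MvPowerSeries.coeff e (g * c) = 0 := by
    intro c
    rw [MvPowerSeries.coeff_mul]
    refine Finset.sum_eq_zero fun z hz => ?_
    rw [Finset.HasAntidiagonal.mem_antidiagonal] at hz
    have hle : z.1 ≤ e := le_of_le_of_eq le_self_add hz
    have : MvPowerSeries.coeff z.1 g = 0 := by
      rw [hgdef, map_sum]
      refine Finset.sum_eq_zero fun i hi => ?_
      rw [MvPowerSeries.X_pow_eq, MvPowerSeries.coeff_monomial]
      rw [Finset.mem_sdiff] at hi
      rw [if_neg]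
      intro hz1
      have h2 : z.1 i = 2 := by rw [hz1]; simp
      have h0 : e i = 0 := he_off i hi.2
      have := hle i
      omega
    rw [this, zero_mul]
  -- reduce to h
  obtain ⟨c, hc⟩ := sub_dvd_pow_sub_pow f h (p - 1)
  have hfh : f - h = g := by rw [hfgh]; ring
  have hsplit : f ^ (p - 1) = h ^ (p - 1) + g * c := by
    rw [← hfh]; have := eq_add_of_sub_eq hc; rw [this]; ring
  rw [hsplit, map_add, hgmul, add_zero]
  -- expand h ^ (p - 1)
  rw [hhdef, add_pow]
  rw [map_sum]
  have hterm : ∀ j ∈ Finset.range (p - 1 + 1),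
      MvPowerSeries.coeff e
        ((MvPowerSeries.X (0:σ) ^ 2) ^ j * (MvPowerSeries.X (1:σ) ^ 2) ^ (p - 1 - j) *
          ((p-1).choose j : MvPowerSeries σ k)) =
      if j = t then ((p - 1).choose j : k) else 0 := by
    intro j hj
    rw [← pow_mul, ← pow_mul, MvPowerSeries.X_pow_eq, MvPowerSeries.X_pow_eq,
      MvPowerSeries.monomial_mul_monomial, one_mul]
    have hcast : ((p-1).choose j : MvPowerSeries σ k) =
        MvPowerSeries.C (((p-1).choose j : k)) := by
      rw [map_natCast]
    rw [hcast, ← MvPowerSeries.monomial_zero_eq_C_apply, MvPowerSeries.monomial_mul_monomial,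
      add_zero, one_mul, MvPowerSeries.coeff_monomial]
    have hiff : (e = Finsupp.single (0:σ) (2 * j) + Finsupp.single 1 (2 * (p - 1 - j)))
        ↔ j = t := by
      constructor
      · intro he
        have h0 := DFunLike.congr_fun he (0 : σ)
        simp [hedef, Finsupp.single_apply, h01, Ne.symm h01] at h0
        omega
      · intro hj'
        have h1 : p - 1 - j = j := by omega
        have h2 : p - 1 = 2 * j := by omega
        rw [hedef, h1, h2]
    by_cases hjt : j = t
    · rw [if_pos ((hiff.mpr hjt)), if_pos hjt]
    · rw [if_neg (fun hh => hjt (hiff.mp hh)), if_neg hjt]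
  rw [Finset.sum_congr rfl hterm, Finset.sum_ite_eq' (Finset.range (p-1+1)) t
    (fun j => ((p - 1).choose j : k)), if_pos]
  rw [Finset.mem_range]
  omega

end A1

/-- Let `k` be an algebraically closed field of odd characteristic `p` and
`d ≥ 1`. Then the `A₁`-singularity `R = k[[x_0, …, x_d]]/(x_0^2 + ⋯ + x_d^2)` is F-pure:
there is an additive map `φ : R → R` with `φ 1 = 1` and `φ (a^p * b) = a * φ b` for all
`a, b ∈ R`, i.e. the inclusion `R^p ↪ R` splits as an `R^p`-module homomorphism. -/
theorem statement14 (k : Type*) [Field k] [IsAlgClosed k]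
    (p : ℕ) (hp : p.Prime) (hodd : Odd p) [CharP k p] (d : ℕ) (hd : 1 ≤ d) :
    ∃ φ : A1Singularity k d →+ A1Singularity k d,
      φ 1 = 1 ∧ ∀ a b : A1Singularity k d, φ (a ^ p * b) = a * φ b := by
  classical
  haveI := Fact.mk hp
  obtain ⟨d', rfl⟩ : ∃ d', d = d' + 1 := ⟨d - 1, by omega⟩
  obtain ⟨t, hpt⟩ : ∃ t, p = 2 * t + 1 := by
    obtain ⟨t, ht⟩ := hodd; exact ⟨t, by omega⟩
  set σ := Fin (d' + 1 + 1) with hσ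
  set f : MvPowerSeries σ k := ∑ i : σ, MvPowerSeries.X i ^ 2 with hfdef
  set I : Ideal (MvPowerSeries σ k) := Ideal.span {f} with hIdef
  set e : σ →₀ ℕ := Finsupp.single (0 : σ) (p - 1) + Finsupp.single 1 (p - 1) with hedef
  have h01 : (0 : σ) ≠ 1 := Fin.zero_ne_one
  have he : ∀ i : σ, e i < p := by
    intro i
    have h1 : Finsupp.single (0 : σ) (p - 1) i ≤ p - 1 := by
      rw [Finsupp.single_apply]; split <;> omega
    have h2 : Finsupp.single (1 : σ) (p - 1) i ≤ p - 1 := by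
      rw [Finsupp.single_apply]; split <;> omega
    have h3 : ¬ ((0 : σ) = i ∧ (1 : σ) = i) := by
      rintro ⟨rfl, hh⟩; exact h01 hh.symm
    have hlt := hp.one_lt
    rw [hedef, Finsupp.add_apply, Finsupp.single_apply, Finsupp.single_apply]
    split_ifs with hA hB hB
    · exact absurd (hA.trans hB.symm) h01
    all_goals omega
  -- the coefficient of f^(p-1) at e is nonzero
  have hcoeff : MvPowerSeries.coeff e (f ^ (p - 1)) = ((p - 1).choose t : k) :=
    coeff_f_pow p hp t hpt d'
  have hne : MvPowerSeries.coeff e (f ^ (p - 1)) ≠ 0 := by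
    rw [hcoeff]
    intro h0
    rw [CharP.cast_eq_zero_iff k p] at h0
    have hdvd : p ∣ (2 * t).factorial := by
      have h1 : (p - 1).choose t * (t.factorial * (2 * t - t).factorial)
          = (2 * t).factorial := by
        have hq : p - 1 = 2 * t := by omega
        have h2 : t ≤ 2 * t := by omega
        rw [hq, ← mul_assoc]
        exact Nat.choose_mul_factorial_mul_factorial h2
      rw [← h1]
      exact h0.mul_right _
    have := (Nat.Prime.dvd_factorial hp).mp hdvd
    omega
  -- the splitting operator
  set u : MvPowerSeries σ k := Phi p e (f ^ (p - 1)) with hudef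
  have huconst : MvPowerSeries.constantCoeff u ≠ 0 := by
    have : MvPowerSeries.constantCoeff u
        = (frobeniusEquiv k p).symm (MvPowerSeries.coeff e (f ^ (p - 1))) := by
      rw [← MvPowerSeries.coeff_zero_eq_constantCoeff, hudef, coeff_Phi, smul_zero, zero_add]
    rw [this]
    intro h0
    exact hne ((frobeniusEquiv k p).symm.injective (h0.trans (map_zero _).symm))
  set w : MvPowerSeries σ k := u⁻¹ with hwdef
  have hwu : w * u = 1 := MvPowerSeries.inv_mul_cancel u huconst
  -- the map on power series
  set ψ : MvPowerSeries σ k → MvPowerSeries σ k :=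
    fun b => w * Phi p e (f ^ (p - 1) * b) with hψdef
  have hψadd : ∀ a b, ψ (a + b) = ψ a + ψ b := by
    intro a b
    rw [hψdef]
    simp only [mul_add, map_add]
  have hψsub : ∀ a b, ψ (a - b) = ψ a - ψ b := by
    intro a b
    rw [hψdef]
    simp only [mul_sub, map_sub]
  have hψkey : ∀ a b, ψ (a ^ p * b) = a * ψ b := by
    intro a b
    rw [hψdef]
    dsimp only
    rw [show f ^ (p - 1) * (a ^ p * b) = a ^ p * (f ^ (p - 1) * b) by ring,
      Phi_pow_mul p e he, mul_left_comm]
  have hψI : ∀ x ∈ I, ψ x ∈ I := by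
    intro x hx
    rw [hIdef, Ideal.mem_span_singleton] at hx ⊢
    obtain ⟨c, rfl⟩ := hx
    have h1 : f ^ (p - 1) * (f * c) = f ^ p * c := by
      rw [← mul_assoc, ← pow_succ, Nat.sub_add_cancel hp.one_le]
    rw [hψdef]
    dsimp only
    rw [h1, Phi_pow_mul p e he]
    exact ⟨w * Phi p e c, by ring⟩
  -- descend to the quotient
  have hmk : ∀ a b : MvPowerSeries σ k, a - b ∈ I →
      Ideal.Quotient.mk I (ψ a) = Ideal.Quotient.mk I (ψ b) := by
    intro a b hab
    rw [Ideal.Quotient.eq, ← hψsub]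
    exact hψI _ hab
  let φ₀ : (MvPowerSeries σ k ⧸ I) → (MvPowerSeries σ k ⧸ I) :=
    fun x => Quotient.liftOn' x (fun s => Ideal.Quotient.mk I (ψ s))
      (fun a b hab => hmk a b (by rwa [Submodule.quotientRel_def] at hab))
  have hφ₀ : ∀ s : MvPowerSeries σ k,
      φ₀ (Ideal.Quotient.mk I s) = Ideal.Quotient.mk I (ψ s) := fun s => rfl
  have hsurj := Ideal.Quotient.mk_surjective (I := I)
  refine ⟨AddMonoidHom.mk' φ₀ ?_, ?_, ?_⟩
  · intro x y
    obtain ⟨a, rfl⟩ := hsurj x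
    obtain ⟨b, rfl⟩ := hsurj y
    show φ₀ (Ideal.Quotient.mk I a + Ideal.Quotient.mk I b) =
      φ₀ (Ideal.Quotient.mk I a) + φ₀ (Ideal.Quotient.mk I b)
    rw [← map_add (Ideal.Quotient.mk I) a b, hφ₀, hφ₀, hφ₀, hψadd,
      map_add (Ideal.Quotient.mk I)]
  · show φ₀ 1 = 1
    rw [show (1 : MvPowerSeries σ k ⧸ I) = Ideal.Quotient.mk I 1 from rfl, hφ₀]
    rw [hψdef]
    dsimp only
    rw [mul_one, ← hudef, hwu]
  · intro a b
    obtain ⟨a', rfl⟩ := hsurj a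
    obtain ⟨b', rfl⟩ := hsurj b
    show φ₀ (Ideal.Quotient.mk I a' ^ p * Ideal.Quotient.mk I b') = _
    rw [← map_pow (Ideal.Quotient.mk I), ← map_mul (Ideal.Quotient.mk I), hφ₀, hψkey,
      map_mul (Ideal.Quotient.mk I)]
    rfl
end
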